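/- Let G be a torsion-free group that is virtually cyclic. Then G is cyclic. -/

import Mathlib

open Subgroup Function

private lemma aux_subgroup_torsionFree {G : Type*} [Group G] (htf : ∀ g : G, g ≠ 1 → ¬IsOfFinOrder g)
    (K : Subgroup G) : ∀ g : K, g ≠ 1 → ¬IsOfFinOrder g := fun x hx hfo =>
  htf (x : G) (fun h => hx (Subtype.ext h)) (K.subtype.isOfFinOrder hfo)

private lemma aux_conj_zpow {G : Type*} [Group G] (g x : G) (n : ℤ) :
    g * x ^ n * g⁻¹ = (g * x * g⁻¹) ^ n := by
  have := map_zpow (MulAut.conj g) x n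
  simp only [MulAut.conj_apply] at this; exact this

theorem torsion_free_virtually_cyclic_is_cyclic
    {G : Type*} [Group G]
    (htf : ∀ g : G, g ≠ 1 → ¬IsOfFinOrder g)
    (hvc : ∃ H : Subgroup G, IsCyclic H ∧ H.FiniteIndex) :
    IsCyclic G := by
  classical
  obtain ⟨H, hHcyc, hHfi⟩ := hvc
  haveI := hHfi
  set N : Subgroup G := H.normalCore with hNdef
  haveI : N.FiniteIndex := Subgroup.finiteIndex_normalCore H
  haveI : N.Normal := H.normalCore_normal
  haveI : IsCyclic N := Subgroup.isCyclic_of_le H.normalCore_le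
  -- generator of N
  obtain ⟨c₀, hc₀⟩ := IsCyclic.exists_generator (α := N)
  by_cases hb1 : (c₀ : G) = 1
  · -- N is trivial, so G is finite, hence trivial by torsion-freeness
    have hfin : Finite G := by
      have hNbot : N = ⊥ := by
        refine (Subgroup.eq_bot_iff_forall _).mpr fun x hx => ?_
        obtain ⟨k, hk⟩ := hc₀ ⟨x, hx⟩
        have h2 : ((c₀ ^ k : N) : G) = x := congrArg Subtype.val hk
        have : (c₀ : G) ^ k = x := by simpa using h2
        rw [hb1, one_zpow] at this
        exact this.symm
      apply Nat.finite_of_card_ne_zero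
      have := Subgroup.FiniteIndex.index_ne_zero (H := N)
      rwa [hNbot, Subgroup.index_bot] at this
    have : Subsingleton G := by
      constructor
      intro a b
      have ha : a = 1 := by
        by_contra h; exact htf a h (isOfFinOrder_of_finite a)
      have hb : b = 1 := by
        by_contra h; exact htf b h (isOfFinOrder_of_finite b)
      rw [ha, hb]
    exact isCyclic_of_subsingleton
  · set b : G := (c₀ : G) with hbdef
    have hbN : b ∈ N := c₀.2
    have hNz : N = Subgroup.zpowers b := by
      apply le_antisymm
      · intro x hx
        obtain ⟨k, hk⟩ := hc₀ ⟨x, hx⟩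
        have h2 : ((c₀ ^ k : N) : G) = x := congrArg Subtype.val hk
        exact ⟨k, by simpa using h2⟩
      · exact Subgroup.zpowers_le.mpr hbN
    have hbinf : ¬IsOfFinOrder b := htf b hb1
    have hbzinj : Function.Injective fun n : ℤ => b ^ n :=
      injective_zpow_iff_not_isOfFinOrder.mpr hbinf
    -- claim 1 : conjugates of b are b or b⁻¹
    have claim1 : ∀ g : G, g * b * g⁻¹ = b ∨ g * b * g⁻¹ = b⁻¹ := by
      intro g
      have h1 : g * b * g⁻¹ ∈ N := Subgroup.Normal.conj_mem ‹N.Normal› b hbN g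
      have h2 : g⁻¹ * b * g ∈ N := by
        have := Subgroup.Normal.conj_mem ‹N.Normal› b hbN g⁻¹
        simpa using this
      rw [hNz, Subgroup.mem_zpowers_iff] at h1 h2
      obtain ⟨m, hm⟩ := h1
      obtain ⟨n, hn⟩ := h2
      have key : b ^ (n * m) = b ^ (1 : ℤ) := by
        calc b ^ (n * m) = (b ^ n) ^ m := by rw [zpow_mul]
          _ = (g⁻¹ * b * g) ^ m := by rw [hn]
          _ = g⁻¹ * b ^ m * g := by
              have := aux_conj_zpow g⁻¹ b m
              simpa using this.symm
          _ = g⁻¹ * (g * b * g⁻¹) * g := by rw [hm]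
          _ = b ^ (1 : ℤ) := by group
      have hnm : n * m = 1 := hbzinj key
      rcases Int.mul_eq_one_iff_eq_one_or_neg_one.mp hnm with ⟨_, hm1⟩ | ⟨_, hm1⟩
      · left; rw [← hm, hm1, zpow_one]
      · right; rw [← hm, hm1]; simp
    -- the centralizer of b
    set C : Subgroup G := Subgroup.centralizer {b} with hCdef
    have hNC : N ≤ C := by
      intro x hx
      rw [hNz, Subgroup.mem_zpowers_iff] at hx
      obtain ⟨k, hk⟩ := hx
      rw [Subgroup.mem_centralizer_singleton_iff, ← hk]
      exact ((Commute.refl b).zpow_right k).symm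
    haveI hCfi : C.FiniteIndex := Subgroup.finiteIndex_of_le hNC
    have hbC : b ∈ C := hNC hbN
    -- b is central in C
    have hbcen : (⟨b, hbC⟩ : C) ∈ Subgroup.center C := by
      rw [Subgroup.mem_center_iff]
      intro g
      apply Subtype.ext
      have := Subgroup.mem_centralizer_singleton_iff.mp g.2
      simpa using this
    -- the center of C has finite index in C
    have hsub_le : N.subgroupOf C ≤ Subgroup.center C := by
      intro x hx
      rw [Subgroup.mem_subgroupOf, hNz, Subgroup.mem_zpowers_iff] at hx
      obtain ⟨k, hk⟩ := hx
      have hxval : x = (⟨b, hbC⟩ : C) ^ k := by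
        apply Subtype.ext
        simpa using hk.symm
      rw [hxval]
      exact Subgroup.zpow_mem _ hbcen k
    haveI : (N.subgroupOf C).FiniteIndex := Subgroup.instFiniteIndex_subgroupOf N C
    haveI hZfi : (Subgroup.center C).FiniteIndex := Subgroup.finiteIndex_of_le hsub_le
    -- transfer homomorphism shows C is abelian
    have hCtf : ∀ g : C, g ≠ 1 → ¬IsOfFinOrder g := aux_subgroup_torsionFree htf C
    have hcomm : ∀ x y : C, x * y = y * x := by
      have hinj : Function.Injective (MonoidHom.transferCenterPow C) := by
        rw [injective_iff_map_eq_one]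
        intro a ha
        by_contra h1
        apply hCtf a h1
        have : (a : C) ^ (Subgroup.center C).index = 1 := by
          have := MonoidHom.transferCenterPow_apply (G := C) a
          rw [ha] at this
          exact_mod_cast this.symm
        exact isOfFinOrder_iff_pow_eq_one.mpr
          ⟨(Subgroup.center C).index, Nat.pos_of_ne_zero hZfi.index_ne_zero, this⟩
      intro x y
      apply hinj
      rw [map_mul, map_mul]
      exact Subtype.ext (Subgroup.mem_center_iff.mp (MonoidHom.transferCenterPow C y).2 _)
    letI : CommGroup C := { (inferInstance : Group C) with mul_comm := hcomm }
    -- C is cyclic : it embeds into the cyclic group N.subgroupOf C by x ↦ x ^ k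
    haveI : (N.subgroupOf C).Normal := Subgroup.normal_of_comm _
    set k : ℕ := (N.subgroupOf C).index with hkdef
    have hk0 : k ≠ 0 := Subgroup.FiniteIndex.index_ne_zero
    have hmem : ∀ x : C, x ^ k ∈ N.subgroupOf C := fun x =>
      Subgroup.pow_index_mem (N.subgroupOf C) x
    let ψ : C →* (N.subgroupOf C) :=
      { toFun := fun x => ⟨x ^ k, hmem x⟩
        map_one' := by simp
        map_mul' := fun x y => by
          apply Subtype.ext
          simp [mul_pow] }
    have hψinj : Function.Injective ψ := by
      rw [injective_iff_map_eq_one]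
      intro a ha
      by_contra h1
      apply hCtf a h1
      have hak : a ^ k = 1 := by
        have h2 : ((ψ a : C)) = (((1 : N.subgroupOf C) : C)) := congrArg Subtype.val ha
        simpa [ψ] using h2
      exact isOfFinOrder_iff_pow_eq_one.mpr ⟨k, Nat.pos_of_ne_zero hk0, hak⟩
    haveI : IsCyclic (N.subgroupOf C) :=
      isCyclic_of_surjective (Subgroup.subgroupOfEquivOfLe hNC).symm
        (Subgroup.subgroupOfEquivOfLe hNC).symm.surjective
    haveI hCcyc : IsCyclic C :=
      isCyclic_of_surjective (MonoidHom.ofInjective hψinj).symm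
        (MonoidHom.ofInjective hψinj).symm.surjective
    -- generator of C
    obtain ⟨c, hc⟩ := IsCyclic.exists_generator (α := C)
    -- c has infinite order
    have hbzc : ∃ t : ℤ, (c : G) ^ t = b := by
      obtain ⟨t, ht⟩ := hc ⟨b, hbC⟩
      have h2 : ((c ^ t : C) : G) = b := congrArg Subtype.val ht
      exact ⟨t, by simpa using h2⟩
    obtain ⟨t, ht⟩ := hbzc
    have hc1 : (c : G) ≠ 1 := by
      intro h
      apply hb1
      rw [← ht, h, one_zpow]
    have hczinj : Function.Injective fun n : ℤ => (c : G) ^ n :=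
      injective_zpow_iff_not_isOfFinOrder.mpr (htf _ hc1)
    have ht0 : t ≠ 0 := by
      intro h
      apply hb1
      rw [← ht, h, zpow_zero]
    -- every element of G lies in C
    have hCtop : ∀ g : G, g ∈ C := by
      intro g
      by_contra hg
      -- g conjugates b to b⁻¹
      have hconj : g * b * g⁻¹ = b⁻¹ := by
        rcases claim1 g with h | h
        · exfalso
          apply hg
          rw [Subgroup.mem_centralizer_singleton_iff]
          have := congrArg (· * g) h
          simpa [mul_assoc] using this
        · exact h
      -- g normalizes C
      have hgC : g * (c : G) * g⁻¹ ∈ C := by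
        rw [Subgroup.mem_centralizer_singleton_iff]
        have hcb : (c : G) * b = b * (c : G) := Subgroup.mem_centralizer_singleton_iff.mp c.2
        have hcb' : Commute (c : G) b := hcb
        have hinv : g⁻¹ * b * g = b ∨ g⁻¹ * b * g = b⁻¹ := by
          have := claim1 g⁻¹
          simpa using this
        have hcomm' : Commute (g⁻¹ * b * g) (c : G) := by
          rcases hinv with h | h
          · rw [h]; exact hcb'.symm
          · rw [h]; exact hcb'.symm.inv_left
        have := hcomm'.eq
        calc g * (c : G) * g⁻¹ * b = g * ((c : G) * (g⁻¹ * b * g)) * g⁻¹ := by group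
          _ = g * ((g⁻¹ * b * g) * (c : G)) * g⁻¹ := by rw [← this]
          _ = b * (g * (c : G) * g⁻¹) := by group
      -- g conjugates c to c^s with s = -1
      obtain ⟨s, hs⟩ := hc ⟨g * (c : G) * g⁻¹, hgC⟩
      have hs' : (c : G) ^ s = g * (c : G) * g⁻¹ := by
        have h2 : ((c ^ s : C) : G) = g * (c : G) * g⁻¹ := congrArg Subtype.val hs
        simpa using h2
      have hst : (c : G) ^ (s * t) = (c : G) ^ (-t) := by
        calc (c : G) ^ (s * t) = ((c : G) ^ s) ^ t := by rw [zpow_mul]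
          _ = (g * (c : G) * g⁻¹) ^ t := by rw [hs']
          _ = g * (c : G) ^ t * g⁻¹ := (aux_conj_zpow g (c : G) t).symm
          _ = g * b * g⁻¹ := by rw [ht]
          _ = b⁻¹ := hconj
          _ = ((c : G) ^ t)⁻¹ := by rw [ht]
          _ = (c : G) ^ (-t) := by rw [zpow_neg]
      have hsm1 : s = -1 := by
        have h1 : s * t = -t := hczinj hst
        have h2 : (s + 1) * t = 0 := by rw [add_mul, one_mul, h1, neg_add_cancel]
        rcases mul_eq_zero.mp h2 with h | h
        · omega
        · exact absurd h ht0
      -- g² ∈ C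
      have hg2C : g ^ 2 ∈ C := by
        rw [Subgroup.mem_centralizer_singleton_iff]
        have : g ^ 2 * b * (g ^ 2)⁻¹ = b := by
          have h1 : g * b⁻¹ * g⁻¹ = b := by
            have := congrArg (fun x => x⁻¹) hconj
            simpa [mul_assoc] using this
          calc g ^ 2 * b * (g ^ 2)⁻¹ = g * (g * b * g⁻¹) * g⁻¹ := by
                rw [pow_two]; group
            _ = g * b⁻¹ * g⁻¹ := by rw [hconj]
            _ = b := h1
        have := congrArg (· * g ^ 2) this
        simpa [mul_assoc] using this
      obtain ⟨m, hm⟩ := hc ⟨g ^ 2, hg2C⟩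
      have hm' : (c : G) ^ m = g ^ 2 := by
        have h2 : ((c ^ m : C) : G) = g ^ 2 := congrArg Subtype.val hm
        simpa using h2
      have hmm : (c : G) ^ (-m) = (c : G) ^ m := by
        calc (c : G) ^ (-m) = ((c : G) ^ (-1 : ℤ)) ^ m := by
              rw [← zpow_mul, neg_one_mul]
          _ = ((c : G) ^ s) ^ m := by rw [hsm1]
          _ = (g * (c : G) * g⁻¹) ^ m := by rw [hs']
          _ = g * (c : G) ^ m * g⁻¹ := (aux_conj_zpow g (c : G) m).symm
          _ = g * g ^ 2 * g⁻¹ := by rw [hm']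
          _ = g ^ 2 := by group
          _ = (c : G) ^ m := hm'.symm
      have hm0 : m = 0 := by
        have := hczinj hmm
        omega
      have hg21 : g ^ 2 = 1 := by
        rw [← hm', hm0, zpow_zero]
      have hgne1 : g ≠ 1 := fun h => hg (h ▸ C.one_mem)
      exact htf g hgne1 (isOfFinOrder_iff_pow_eq_one.mpr ⟨2, by norm_num, hg21⟩)
    -- conclude : G is cyclic
    refine ⟨⟨(c : G), fun x => ?_⟩⟩
    obtain ⟨n, hn⟩ := hc ⟨x, hCtop x⟩
    have h2 : ((c ^ n : C) : G) = x := congrArg Subtype.val hn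
    exact ⟨n, by simpa using h2⟩
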